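/- arXiv:2510.04337 — 2 statements merged into one kernel-verified Lean document; each statement's English description precedes it below -/
import Mathlib

section
/- Let A₁ and A₂ be 2×2 real orthogonal matrices with det A₁ = det A₂ = 1, and let p₁, p₂ ∈ ℝ². Define the rotations h_i : ℝ² → ℝ² by h_i(v) = A_i(v − p_i) + p_i for i = 1, 2. Then for every v ∈ ℝ², (h₂⁻¹ ∘ h₁⁻¹ ∘ h₂ ∘ h₁)(v) = v + (I₂ − A₂⁻¹)(I₂ − A₁⁻¹)(p₂ − p₁), where I₂ is the 2×2 identity matrix. Moreover, if A₁ ≠ I₂, A₂ ≠ I₂, and p₁ ≠ p₂, then the translation vector (I₂ − A₂⁻¹)(I₂ − A₁⁻¹)(p₂ − p₁) is nonzero. -/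
noncomputable section

open Matrix

/-- Structure of a 2×2 special orthogonal matrix. -/
lemma rot_struct (A : Matrix (Fin 2) (Fin 2) ℝ) (ho : Aᵀ * A = 1) (hd : A.det = 1) :
    A 1 1 = A 0 0 ∧ A 0 1 = - A 1 0 ∧ (A 0 0) ^ 2 + (A 1 0) ^ 2 = 1 := by
  have e00 := congrFun (congrFun ho 0) 0
  have e01 := congrFun (congrFun ho 0) 1
  have e11 := congrFun (congrFun ho 1) 1
  simp [Matrix.mul_apply, Fin.sum_univ_two, Matrix.transpose_apply, Matrix.one_apply] at e00 e01 e11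
  rw [Matrix.det_fin_two] at hd
  refine ⟨?_, ?_, by linear_combination e00⟩
  · linear_combination (-(A 1 1)) * e00 + (A 1 0) * e01 + (A 0 0) * hd
  · linear_combination (-(A 0 1)) * e00 + (A 0 0) * e01 - (A 1 0) * hd

lemma rot_eq (A : Matrix (Fin 2) (Fin 2) ℝ) (ho : Aᵀ * A = 1) (hd : A.det = 1) :
    A = !![A 0 0, -(A 1 0); A 1 0, A 0 0] := by
  obtain ⟨h1, h2, _⟩ := rot_struct A ho hd
  ext i j
  fin_cases i <;> fin_cases j <;> simp [h1, h2]

lemma rot_inv (A : Matrix (Fin 2) (Fin 2) ℝ) (ho : Aᵀ * A = 1) (hd : A.det = 1) :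
    A⁻¹ = Aᵀ := by
  exact Matrix.inv_eq_left_inv ho

lemma rot_comm (A B : Matrix (Fin 2) (Fin 2) ℝ) (hoA : Aᵀ * A = 1) (hdA : A.det = 1)
    (hoB : Bᵀ * B = 1) (hdB : B.det = 1) : A * B = B * A := by
  rw [rot_eq A hoA hdA, rot_eq B hoB hdB]
  ext i j
  fin_cases i <;> fin_cases j <;>
    simp [Matrix.mul_apply, Fin.sum_univ_two] <;> ring

theorem stmt14 (A₁ A₂ : Matrix (Fin 2) (Fin 2) ℝ)
    (h₁o : A₁ᵀ * A₁ = 1) (h₂o : A₂ᵀ * A₂ = 1)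
    (h₁d : A₁.det = 1) (h₂d : A₂.det = 1)
    (p₁ p₂ : Fin 2 → ℝ)
    (h₁ h₂ g₁ g₂ : (Fin 2 → ℝ) → Fin 2 → ℝ)
    (hh₁ : ∀ v, h₁ v = A₁.mulVec (v - p₁) + p₁)
    (hh₂ : ∀ v, h₂ v = A₂.mulVec (v - p₂) + p₂)
    (hg₁ : ∀ v, g₁ v = A₁⁻¹.mulVec (v - p₁) + p₁)
    (hg₂ : ∀ v, g₂ v = A₂⁻¹.mulVec (v - p₂) + p₂) :
    (∀ v, (g₂ ∘ g₁ ∘ h₂ ∘ h₁) v =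
        v + (1 - A₂⁻¹).mulVec ((1 - A₁⁻¹).mulVec (p₂ - p₁))) ∧
      (A₁ ≠ 1 → A₂ ≠ 1 → p₁ ≠ p₂ →
        (1 - A₂⁻¹).mulVec ((1 - A₁⁻¹).mulVec (p₂ - p₁)) ≠ 0) := by
  have hinv₁ : A₁⁻¹ * A₁ = 1 := Matrix.nonsing_inv_mul _ (by simp [h₁d])
  have hinv₂ : A₂⁻¹ * A₂ = 1 := Matrix.nonsing_inv_mul _ (by simp [h₂d])
  have hinv₁' : A₁ * A₁⁻¹ = 1 := Matrix.mul_nonsing_inv _ (by simp [h₁d])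
  have hinv₂' : A₂ * A₂⁻¹ = 1 := Matrix.mul_nonsing_inv _ (by simp [h₂d])
  -- commutation
  have hcomm : A₁ * A₂ = A₂ * A₁ := rot_comm A₁ A₂ h₁o h₁d h₂o h₂d
  have hcomm1 : A₁⁻¹ * A₂ = A₂ * A₁⁻¹ := by
    calc A₁⁻¹ * A₂ = A₁⁻¹ * A₂ * (A₁ * A₁⁻¹) := by rw [hinv₁', mul_one]
    _ = A₁⁻¹ * (A₂ * A₁) * A₁⁻¹ := by noncomm_ring
    _ = A₁⁻¹ * (A₁ * A₂) * A₁⁻¹ := by rw [hcomm]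
    _ = (A₁⁻¹ * A₁) * (A₂ * A₁⁻¹) := by noncomm_ring
    _ = A₂ * A₁⁻¹ := by rw [hinv₁, one_mul]
  have k1 : A₂⁻¹ * A₁⁻¹ * A₂ = A₁⁻¹ := by
    calc A₂⁻¹ * A₁⁻¹ * A₂ = A₂⁻¹ * (A₁⁻¹ * A₂) := by rw [mul_assoc]
    _ = A₂⁻¹ * (A₂ * A₁⁻¹) := by rw [hcomm1]
    _ = (A₂⁻¹ * A₂) * A₁⁻¹ := by rw [mul_assoc]
    _ = A₁⁻¹ := by rw [hinv₂, one_mul]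
  have k2 : A₂⁻¹ * A₁⁻¹ * A₂ * A₁ = 1 := by
    rw [k1, hinv₁]
  constructor
  · intro v
    simp only [Function.comp_apply, hh₁, hh₂, hg₁, hg₂]
    simp only [Matrix.mulVec_add, Matrix.mulVec_sub, Matrix.mulVec_mulVec,
      Matrix.sub_mulVec, Matrix.one_mulVec, Matrix.mul_sub, Matrix.sub_mul,
      Matrix.one_mul, Matrix.mul_one, ← mul_assoc, k1, k2, hinv₁, Matrix.one_mulVec]
    abel
  · intro hA₁ hA₂ hp
    obtain ⟨d₁, c₁, s₁⟩ := rot_struct A₁ h₁o h₁d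
    obtain ⟨d₂, c₂, s₂⟩ := rot_struct A₂ h₂o h₂d
    have hdet₁ : (1 - A₁⁻¹).det ≠ 0 := by
      rw [rot_inv A₁ h₁o h₁d, Matrix.det_fin_two]
      simp [Matrix.transpose_apply, d₁, c₁]
      intro h
      apply hA₁
      have ha : A₁ 0 0 = 1 := by nlinarith
      have hb : A₁ 1 0 = 0 := by nlinarith
      ext i j
      fin_cases i <;> fin_cases j <;> simp [ha, hb, d₁, c₁, Matrix.one_apply]
    have hdet₂ : (1 - A₂⁻¹).det ≠ 0 := by
      rw [rot_inv A₂ h₂o h₂d, Matrix.det_fin_two]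
      simp [Matrix.transpose_apply, d₂, c₂]
      intro h
      apply hA₂
      have ha : A₂ 0 0 = 1 := by nlinarith
      have hb : A₂ 1 0 = 0 := by nlinarith
      ext i j
      fin_cases i <;> fin_cases j <;> simp [ha, hb, d₂, c₂, Matrix.one_apply]
    have key : ∀ (M : Matrix (Fin 2) (Fin 2) ℝ) (x : Fin 2 → ℝ), M.det ≠ 0 → x ≠ 0 →
        M.mulVec x ≠ 0 := by
      intro M x hM hx h0
      apply hx
      have : (M⁻¹ * M).mulVec x = M⁻¹.mulVec 0 := by
        rw [← Matrix.mulVec_mulVec, h0]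
      rwa [Matrix.nonsing_inv_mul _ (Ne.isUnit hM), Matrix.one_mulVec,
        Matrix.mulVec_zero] at this
    apply key _ _ hdet₂
    apply key _ _ hdet₁
    intro h
    apply hp
    have := sub_eq_zero.mp h
    exact this.symm
end
end

section
/- Let a, b, c, d, w ∈ ℝ satisfy w² ≠ 1, a² + b² ≠ c² + d², and (a−1)² + b² ≠ (c−w)² + d². Then there exists a nonzero real polynomial F in two variables of total degree at most 2 such that: for all x₁, y₁, x₂, y₂ ∈ ℝ satisfying x₁² + y₁² = x₂² + y₂², (x₁ − 1)² + y₁² = (x₂ − w)² + y₂², and (x₁ − a)² + (y₁ − b)² = (x₂ − c)² + (y₂ − d)², one has F(x₂, y₂) = 0. -/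
set_option maxHeartbeats 1000000
noncomputable section

open MvPolynomial

theorem stmt18 (a b c d w : ℝ) (hw : w ^ 2 ≠ 1)
    (h1 : a ^ 2 + b ^ 2 ≠ c ^ 2 + d ^ 2)
    (h2 : (a - 1) ^ 2 + b ^ 2 ≠ (c - w) ^ 2 + d ^ 2) :
    ∃ F : MvPolynomial (Fin 2) ℝ, F ≠ 0 ∧ F.totalDegree ≤ 2 ∧
      ∀ x₁ y₁ x₂ y₂ : ℝ,
        x₁ ^ 2 + y₁ ^ 2 = x₂ ^ 2 + y₂ ^ 2 →
        (x₁ - 1) ^ 2 + y₁ ^ 2 = (x₂ - w) ^ 2 + y₂ ^ 2 →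
        (x₁ - a) ^ 2 + (y₁ - b) ^ 2 = (x₂ - c) ^ 2 + (y₂ - d) ^ 2 →
        MvPolynomial.eval ![x₂, y₂] F = 0 := by
  -- abbreviations (plain lets in the meta-level, written out fully)
  refine ⟨C (b ^ 2 * w ^ 2 + (c - a * w) ^ 2 - b ^ 2) * X 0 ^ 2
      + C (d ^ 2 - b ^ 2) * X 1 ^ 2
      + C (2 * d * (c - a * w)) * (X 0 * X 1)
      + C (2 * b ^ 2 * w * ((1 - w ^ 2) / 2)
          + 2 * (c - a * w) * ((a ^ 2 + b ^ 2 - c ^ 2 - d ^ 2) / 2 - a * ((1 - w ^ 2) / 2))) * X 0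
      + C (2 * d * ((a ^ 2 + b ^ 2 - c ^ 2 - d ^ 2) / 2 - a * ((1 - w ^ 2) / 2))) * X 1
      + C (b ^ 2 * ((1 - w ^ 2) / 2) ^ 2
          + ((a ^ 2 + b ^ 2 - c ^ 2 - d ^ 2) / 2 - a * ((1 - w ^ 2) / 2)) ^ 2), ?_, ?_, ?_⟩
  · -- nonzero
    intro hF
    have hev : ∀ x y : ℝ,
        (b ^ 2 * w ^ 2 + (c - a * w) ^ 2 - b ^ 2) * x ^ 2
        + (d ^ 2 - b ^ 2) * y ^ 2
        + (2 * d * (c - a * w)) * (x * y)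
        + (2 * b ^ 2 * w * ((1 - w ^ 2) / 2)
          + 2 * (c - a * w) * ((a ^ 2 + b ^ 2 - c ^ 2 - d ^ 2) / 2 - a * ((1 - w ^ 2) / 2))) * x
        + (2 * d * ((a ^ 2 + b ^ 2 - c ^ 2 - d ^ 2) / 2 - a * ((1 - w ^ 2) / 2))) * y
        + (b ^ 2 * ((1 - w ^ 2) / 2) ^ 2
          + ((a ^ 2 + b ^ 2 - c ^ 2 - d ^ 2) / 2 - a * ((1 - w ^ 2) / 2)) ^ 2) = 0 := by
      intro x y
      have := congrArg (MvPolynomial.eval ![x, y]) hF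
      simpa using this
    have e00 := hev 0 0
    have e10 := hev 1 0
    have e10' := hev (-1) 0
    have e01 := hev 0 1
    have e01' := hev 0 (-1)
    have e11 := hev 1 1
    -- extract coefficients
    have cA : b ^ 2 * w ^ 2 + (c - a * w) ^ 2 - b ^ 2 = 0 := by linarith
    have cB : d ^ 2 - b ^ 2 = 0 := by linarith
    have cC : 2 * d * (c - a * w) = 0 := by linarith
    have cG : b ^ 2 * ((1 - w ^ 2) / 2) ^ 2
        + ((a ^ 2 + b ^ 2 - c ^ 2 - d ^ 2) / 2 - a * ((1 - w ^ 2) / 2)) ^ 2 = 0 := by linarith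
    have hs0 : (1 - w ^ 2) / 2 ≠ 0 := by
      intro h; exact hw (by linarith)
    -- from cG : both squares vanish
    have cG' : (b * ((1 - w ^ 2) / 2)) ^ 2
        + ((a ^ 2 + b ^ 2 - c ^ 2 - d ^ 2) / 2 - a * ((1 - w ^ 2) / 2)) ^ 2 = 0 := by
      linear_combination cG
    have hbs : b * ((1 - w ^ 2) / 2) = 0 := by
      have h1' : (b * ((1 - w ^ 2) / 2)) ^ 2 = 0 := by
        have := sq_nonneg (b * ((1 - w ^ 2) / 2))
        have := sq_nonneg ((a ^ 2 + b ^ 2 - c ^ 2 - d ^ 2) / 2 - a * ((1 - w ^ 2) / 2))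
        linarith
      exact pow_eq_zero_iff (by norm_num) |>.1 h1'
    have hm0 : (a ^ 2 + b ^ 2 - c ^ 2 - d ^ 2) / 2 - a * ((1 - w ^ 2) / 2) = 0 := by
      have h1' : ((a ^ 2 + b ^ 2 - c ^ 2 - d ^ 2) / 2 - a * ((1 - w ^ 2) / 2)) ^ 2 = 0 := by
        have := sq_nonneg (b * ((1 - w ^ 2) / 2))
        have := sq_nonneg ((a ^ 2 + b ^ 2 - c ^ 2 - d ^ 2) / 2 - a * ((1 - w ^ 2) / 2))
        linarith
      exact pow_eq_zero_iff (by norm_num) |>.1 h1'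
    have hb0 : b = 0 := by
      rcases mul_eq_zero.1 hbs with h | h
      · exact h
      · exact absurd h hs0
    have hd0 : d = 0 := by
      have : d ^ 2 = 0 := by rw [hb0] at cB; linarith
      exact pow_eq_zero_iff (by norm_num) |>.1 this
    have hce : c - a * w = 0 := by
      have : (c - a * w) ^ 2 = 0 := by rw [hb0] at cA; linarith
      exact pow_eq_zero_iff (by norm_num) |>.1 this
    have ha' : (a ^ 2 - a) * (1 - w ^ 2) = 0 := by
      linear_combination 2 * hm0 + (c + a * w) * hce - b * hb0 + d * hd0
    have ha01 : a = 0 ∨ a = 1 := by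
      rcases mul_eq_zero.1 ha' with h | h
      · have : a * (a - 1) = 0 := by linear_combination h
        rcases mul_eq_zero.1 this with h' | h'
        · exact Or.inl h'
        · exact Or.inr (by linarith)
      · exact absurd h (by intro hh; exact hw (by linarith))
    rcases ha01 with h | h
    · refine h1 ?_
      have hc0 : c = 0 := by rw [h] at hce; linarith
      linear_combination a * h + b * hb0 - c * hc0 - d * hd0
    · refine h2 ?_
      have hcw : c = w := by rw [h] at hce; linarith
      linear_combination (a - 1) * h + b * hb0 - (c - w) * hcw - d * hd0
  · -- degree bound
    have hC2 : ∀ (r : ℝ) (p : MvPolynomial (Fin 2) ℝ), p.totalDegree ≤ 2 →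
        (C r * p).totalDegree ≤ 2 := fun r p hp =>
      le_trans (totalDegree_mul _ _) (by simpa [totalDegree_C] using hp)
    have hX2 : ∀ i : Fin 2, (X i ^ 2 : MvPolynomial (Fin 2) ℝ).totalDegree ≤ 2 :=
      fun i => le_trans (totalDegree_pow _ _) (by simp [totalDegree_X])
    have hXX : ((X 0 * X 1 : MvPolynomial (Fin 2) ℝ)).totalDegree ≤ 2 :=
      le_trans (totalDegree_mul _ _) (by simp [totalDegree_X])
    have hX1 : ∀ i : Fin 2, (X i : MvPolynomial (Fin 2) ℝ).totalDegree ≤ 2 := by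
      simp [totalDegree_X]
    refine le_trans (totalDegree_add _ _) (max_le (le_trans (totalDegree_add _ _)
      (max_le (le_trans (totalDegree_add _ _) (max_le (le_trans (totalDegree_add _ _)
      (max_le (le_trans (totalDegree_add _ _) (max_le ?_ ?_)) ?_)) ?_)) ?_)) ?_)
    · exact hC2 _ _ (hX2 0)
    · exact hC2 _ _ (hX2 1)
    · exact hC2 _ _ hXX
    · exact hC2 _ _ (hX1 0)
    · exact hC2 _ _ (hX1 1)
    · exact le_trans (le_of_eq (totalDegree_C _)) (by norm_num)
  · intro x₁ y₁ x₂ y₂ heq1 heq2 heq3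
    have hx1 : x₁ = w * x₂ + (1 - w ^ 2) / 2 := by linear_combination (heq1 - heq2) / 2
    have hy1 : b * y₁ = (c - a * w) * x₂ + d * y₂
        + ((a ^ 2 + b ^ 2 - c ^ 2 - d ^ 2) / 2 - a * ((1 - w ^ 2) / 2)) := by
      linear_combination (heq1 - heq3) / 2 - a * hx1
    simp only [MvPolynomial.eval_add, MvPolynomial.eval_mul, MvPolynomial.eval_C,
      MvPolynomial.eval_pow, MvPolynomial.eval_X, Matrix.cons_val_zero, Matrix.cons_val_one,
      Matrix.head_cons]
    linear_combination (b ^ 2) * heq1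
      - (b ^ 2 * (x₁ + w * x₂ + (1 - w ^ 2) / 2)) * hx1
      - (b * y₁ + (c - a * w) * x₂ + d * y₂
        + ((a ^ 2 + b ^ 2 - c ^ 2 - d ^ 2) / 2 - a * ((1 - w ^ 2) / 2))) * hy1
end
end
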